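/- Let A be a category with finite products such that for an object a, the slice A/a has finite products. Then the n-fold composition of spans functor (A/(a×a))ⁿ → A/(a×a), given by pullback-composition of endospans of a, is a local right adjoint for every n ∈ ℕ. -/

import Mathlib

open CategoryTheory CategoryTheory.Limits

universe v u

universe u₁ u₂ u₃ u₄ w₁ w₂ w₃ w₄

namespace Paper

variable {A : Type u} [Category.{v} A]

/-- Binary composition of endospans of `a`, computed via the binary product in `A/a`
(which is the pullback composing the spans). -/
noncomputable def binSpanComp [HasFiniteProducts A] (a : A) [HasFiniteProducts (Over a)] :
    Over (a ⨯ a) × Over (a ⨯ a) ⥤ Over (a ⨯ a) where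
  obj S := Over.mk
    (prod.lift
      ((Limits.prod.fst :
          (Over.mk (S.1.hom ≫ Limits.prod.snd) ⨯ Over.mk (S.2.hom ≫ Limits.prod.fst)) ⟶ _).left ≫
        S.1.hom ≫ Limits.prod.fst)
      ((Limits.prod.snd :
          (Over.mk (S.1.hom ≫ Limits.prod.snd) ⨯ Over.mk (S.2.hom ≫ Limits.prod.fst)) ⟶ _).left ≫
        S.2.hom ≫ Limits.prod.snd))
  map {S T} f := Over.homMk
    (Limits.prod.map
      (Over.homMk f.1.left (by dsimp; rw [← Category.assoc, Over.w]) :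
        Over.mk (S.1.hom ≫ Limits.prod.snd) ⟶ Over.mk (T.1.hom ≫ Limits.prod.snd))
      (Over.homMk f.2.left (by dsimp; rw [← Category.assoc, Over.w]) :
        Over.mk (S.2.hom ≫ Limits.prod.fst) ⟶ Over.mk (T.2.hom ≫ Limits.prod.fst))).left
    (by
      dsimp
      ext
      · rw [Category.assoc, prod.lift_fst, prod.lift_fst, ← Over.comp_left_assoc, prod.map_fst,
          Over.comp_left_assoc]
        dsimp
        erw [← Category.assoc (Over.Hom.left f.1), Over.w f.1]
        try simp only [Category.assoc]
      · rw [Category.assoc, prod.lift_snd, prod.lift_snd, ← Over.comp_left_assoc, prod.map_snd,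
          Over.comp_left_assoc]
        dsimp
        erw [← Category.assoc (Over.Hom.left f.2), Over.w f.2]
        try simp only [Category.assoc])
  map_id S := by
    apply Over.OverMorphism.ext
    dsimp
    have h : Limits.prod.map
        (Over.homMk (𝟙 S.1.left) (by simp) :
          Over.mk (S.1.hom ≫ Limits.prod.snd) ⟶ Over.mk (S.1.hom ≫ Limits.prod.snd))
        (Over.homMk (𝟙 S.2.left) (by simp) :
          Over.mk (S.2.hom ≫ Limits.prod.fst) ⟶ Over.mk (S.2.hom ≫ Limits.prod.fst)) = 𝟙 _ := by
      apply Limits.prod.hom_ext <;> apply Over.OverMorphism.ext <;> simp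
    exact congrArg (fun k => k.left) h
  map_comp {S T U} f g := by
    apply Over.OverMorphism.ext
    dsimp
    have h : Limits.prod.map
        (Over.homMk (f.1.left ≫ g.1.left)
          (by dsimp; rw [Category.assoc, ← Category.assoc g.1.left, Over.w, ← Category.assoc, Over.w]) :
          Over.mk (S.1.hom ≫ Limits.prod.snd) ⟶ Over.mk (U.1.hom ≫ Limits.prod.snd))
        (Over.homMk (f.2.left ≫ g.2.left)
          (by dsimp; rw [Category.assoc, ← Category.assoc g.2.left, Over.w, ← Category.assoc, Over.w]) :
          Over.mk (S.2.hom ≫ Limits.prod.fst) ⟶ Over.mk (U.2.hom ≫ Limits.prod.fst)) =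
        (Limits.prod.map
          (Over.homMk f.1.left (by dsimp; rw [← Category.assoc, Over.w]) :
            Over.mk (S.1.hom ≫ Limits.prod.snd) ⟶ Over.mk (T.1.hom ≫ Limits.prod.snd))
          (Over.homMk f.2.left (by dsimp; rw [← Category.assoc, Over.w]) :
            Over.mk (S.2.hom ≫ Limits.prod.fst) ⟶ Over.mk (T.2.hom ≫ Limits.prod.fst))) ≫
        (Limits.prod.map
          (Over.homMk g.1.left (by dsimp; rw [← Category.assoc, Over.w]) :
            Over.mk (T.1.hom ≫ Limits.prod.snd) ⟶ Over.mk (U.1.hom ≫ Limits.prod.snd))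
          (Over.homMk g.2.left (by dsimp; rw [← Category.assoc, Over.w]) :
            Over.mk (T.2.hom ≫ Limits.prod.fst) ⟶ Over.mk (U.2.hom ≫ Limits.prod.fst))) := by
      apply Limits.prod.hom_ext <;> apply Over.OverMorphism.ext <;> simp
    exact congrArg (fun k => k.left) h

/-- `n`-fold composition of endospans of `a`, as a functor `(A/(a×a))ⁿ ⥤ A/(a×a)`.
For `n = 0` it is constant at the identity span (the diagonal). -/
noncomputable def spanCompN [HasFiniteProducts A] (a : A) [HasFiniteProducts (Over a)] :
    ∀ n : ℕ, ((Fin n → Over (a ⨯ a)) ⥤ Over (a ⨯ a))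
  | 0 => (Functor.const _).obj (Over.mk (prod.lift (𝟙 a) (𝟙 a)))
  | n + 1 =>
      Functor.prod' (Pi.comap (fun _ : Fin (n + 1) => Over (a ⨯ a)) Fin.castSucc ⋙ spanCompN a n)
        (Pi.eval _ (Fin.last n)) ⋙ binSpanComp a

/-! ### Auxiliary material -/

section ProdAdj

variable {C₁ : Type u₁} {C₂ : Type u₂} {D₁ : Type u₃} {D₂ : Type u₄}
  [Category.{w₁} C₁] [Category.{w₂} C₂] [Category.{w₃} D₁] [Category.{w₄} D₂]

/-- Product of two adjunctions. -/
def prodAdj {L₁ : C₁ ⥤ D₁} {R₁ : D₁ ⥤ C₁} {L₂ : C₂ ⥤ D₂} {R₂ : D₂ ⥤ C₂}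
    (adj₁ : L₁ ⊣ R₁) (adj₂ : L₂ ⊣ R₂) : L₁.prod L₂ ⊣ R₁.prod R₂ :=
  Adjunction.mkOfHomEquiv
    { homEquiv := fun X Y => (adj₁.homEquiv X.1 Y.1).prodCongr (adj₂.homEquiv X.2 Y.2)
      homEquiv_naturality_left_symm := fun f g => Prod.ext
        (adj₁.homEquiv_naturality_left_symm f.1 g.1)
        (adj₂.homEquiv_naturality_left_symm f.2 g.2)
      homEquiv_naturality_right := fun f g => Prod.ext
        (adj₁.homEquiv_naturality_right f.1 g.1)
        (adj₂.homEquiv_naturality_right f.2 g.2) }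

lemma prod_isRightAdjoint {R₁ : D₁ ⥤ C₁} {R₂ : D₂ ⥤ C₂}
    [R₁.IsRightAdjoint] [R₂.IsRightAdjoint] : (R₁.prod R₂).IsRightAdjoint :=
  (prodAdj (Adjunction.ofIsRightAdjoint R₁) (Adjunction.ofIsRightAdjoint R₂)).isRightAdjoint

/-- The slice of a product category over a pair is the product of the slices. -/
def pairOverEquiv {E₁ E₂ : Type u₁} [Category.{w₁} E₁] [Category.{w₁} E₂] (P : E₁) (Q : E₂) :
    Over ((P, Q) : E₁ × E₂) ≌ Over P × Over Q where
  functor :=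
    { obj := fun Z => (Over.mk Z.hom.1, Over.mk Z.hom.2)
      map := fun {Z W} u =>
        (Over.homMk u.left.1 (congrArg Prod.fst (Over.w u)),
         Over.homMk u.left.2 (congrArg Prod.snd (Over.w u)))
      map_id := fun Z => by
        refine Prod.ext ?_ ?_ <;> apply Over.OverMorphism.ext <;> rfl
      map_comp := fun u v => by
        refine Prod.ext ?_ ?_ <;> apply Over.OverMorphism.ext <;> rfl }
  inverse :=
    { obj := fun z => Over.mk (((z.1.hom, z.2.hom) : ((z.1.left, z.2.left) : E₁ × E₂) ⟶ (P, Q)))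
      map := fun {z w} u =>
        Over.homMk ((u.1.left, u.2.left)) (by exact Prod.ext (Over.w u.1) (Over.w u.2))
      map_id := fun z => by apply Over.OverMorphism.ext; rfl
      map_comp := fun u v => by apply Over.OverMorphism.ext; rfl }
  unitIso := NatIso.ofComponents (fun Z => Iso.refl _) (by
    intro Z W u
    apply Over.OverMorphism.ext
    simp only [Iso.refl_hom, Category.comp_id, Category.id_comp]
    rfl)
  counitIso := NatIso.ofComponents (fun z => Iso.refl _) (by
    intro z w u
    refine Prod.ext ?_ ?_ <;> apply Over.OverMorphism.ext <;>
      simp only [Iso.refl_hom, Category.comp_id, Category.id_comp] <;> rfl)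
  functor_unitIso_comp := by
    intro Z
    refine Prod.ext ?_ ?_ <;> apply Over.OverMorphism.ext <;> dsimp <;> simp

end ProdAdj

section FinSplit

variable {D : Type u₁} [Category.{w₁} D] {n : ℕ}

/-- Splitting off the last coordinate of a slice of a finite power category. -/
def finSplit (X : Fin (n + 1) → D) :
    Over X ⥤ Over (fun j : Fin n => X j.castSucc) × Over (X (Fin.last n)) where
  obj Z := (Over.mk (Y := fun j => Z.left j.castSucc) (fun j => Z.hom j.castSucc),
            Over.mk (Z.hom (Fin.last n)))
  map {Z W} u :=
    (Over.homMk (fun j => u.left j.castSucc) (funext fun j => congrFun (Over.w u) j.castSucc),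
     Over.homMk (u.left (Fin.last n)) (congrFun (Over.w u) (Fin.last n)))
  map_id Z := by
    refine Prod.ext ?_ ?_ <;> apply Over.OverMorphism.ext <;> rfl
  map_comp u v := by
    refine Prod.ext ?_ ?_ <;> apply Over.OverMorphism.ext <;> rfl

instance (X : Fin (n + 1) → D) : (finSplit X).Faithful where
  map_injective {Z W} {u v} h := by
    apply Over.OverMorphism.ext
    funext i
    induction i using Fin.lastCases with
    | last => exact congrArg CommaMorphism.left (congrArg Prod.snd h)
    | cast j => exact congrFun (congrArg CommaMorphism.left (congrArg Prod.fst h)) j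

instance (X : Fin (n + 1) → D) : (finSplit X).Full where
  map_surjective {Z W} u := by
    refine ⟨Over.homMk (fun i => Fin.lastCases (motive := fun i => Z.left i ⟶ W.left i)
      u.2.left (fun j => u.1.left j) i) ?_, ?_⟩
    · funext i
      induction i using Fin.lastCases with
      | last =>
        show Fin.lastCases (motive := fun i => Z.left i ⟶ W.left i)
          u.2.left (fun j => u.1.left j) (Fin.last n) ≫ W.hom (Fin.last n) = Z.hom (Fin.last n)
        erw [Fin.lastCases_last]
        exact Over.w u.2
      | cast j =>
        show Fin.lastCases (motive := fun i => Z.left i ⟶ W.left i)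
          u.2.left (fun j => u.1.left j) j.castSucc ≫ W.hom j.castSucc = Z.hom j.castSucc
        erw [Fin.lastCases_castSucc]
        exact congrFun (Over.w u.1) j
    · refine Prod.ext ?_ ?_ <;> apply Over.OverMorphism.ext
      · funext j
        simp [finSplit]
      · simp [finSplit]

/-- Glue an object of the split slice back to an object of the slice. -/
def finGlue (X : Fin (n + 1) → D) (p : Over (fun j : Fin n => X j.castSucc))
    (q : Over (X (Fin.last n))) : Over X :=
  Over.mk (Y := Fin.snoc (α := fun _ => D) p.left q.left) (fun i =>
    Fin.lastCases (motive := fun i => Fin.snoc (α := fun _ => D) p.left q.left i ⟶ X i)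
      (eqToHom (by simp) ≫ q.hom)
      (fun j => eqToHom (by simp) ≫ p.hom j) i)

instance (X : Fin (n + 1) → D) : (finSplit X).EssSurj where
  mem_essImage pq := by
    obtain ⟨p, q⟩ := pq
    refine ⟨finGlue X p q, ⟨?_⟩⟩
    refine ⟨(?_, ?_), (?_, ?_), ?_, ?_⟩
    · exact Over.homMk (fun j => eqToHom (by simp [finGlue, finSplit]))
        (funext fun j => by simp [finGlue, finSplit])
    · exact Over.homMk (eqToHom (by simp [finGlue, finSplit]))
        (by simp [finGlue, finSplit])
    · exact Over.homMk (fun j => eqToHom (by simp [finGlue, finSplit]))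
        (funext fun j => by simp [finGlue, finSplit]; exact (eqToHom_trans_assoc _ _ _).trans ((congrArg (· ≫ _) (eqToHom_refl _ _)).trans (Category.id_comp _)))
    · exact Over.homMk (eqToHom (by simp [finGlue, finSplit]))
        (by simp [finGlue, finSplit]; exact (eqToHom_trans_assoc _ _ _).trans ((congrArg (· ≫ _) (eqToHom_refl _ _)).trans (Category.id_comp _)))
    · refine Prod.ext ?_ ?_ <;> apply Over.OverMorphism.ext
      · funext j; simp [finGlue, finSplit]; exact (eqToHom_trans _ _).trans (eqToHom_refl _ _)
      · simp [finGlue, finSplit]; exact (eqToHom_trans _ _).trans (eqToHom_refl _ _)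
    · refine Prod.ext ?_ ?_ <;> apply Over.OverMorphism.ext
      · funext j; simp [finGlue, finSplit]; exact (eqToHom_trans _ _).trans (eqToHom_refl _ _)
      · simp [finGlue, finSplit]; exact (eqToHom_trans _ _).trans (eqToHom_refl _ _)

instance (X : Fin (n + 1) → D) : (finSplit X).IsEquivalence := {}

end FinSplit

section BinSlice

variable [HasFiniteProducts A] (a : A) [HasFiniteProducts (Over a)]

/-- The apex object of the composite of two spans (as an object of `Over a`). -/
noncomputable def pObj (S T : Over (a ⨯ a)) : Over a :=
  Over.mk (S.hom ≫ Limits.prod.snd) ⨯ Over.mk (T.hom ≫ Limits.prod.fst)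

/-- First projection of the composite apex. -/
noncomputable def pr1 (S T : Over (a ⨯ a)) : (pObj a S T).left ⟶ S.left :=
  (Limits.prod.fst : pObj a S T ⟶ Over.mk (S.hom ≫ Limits.prod.snd)).left

/-- Second projection of the composite apex. -/
noncomputable def pr2 (S T : Over (a ⨯ a)) : (pObj a S T).left ⟶ T.left :=
  (Limits.prod.snd : pObj a S T ⟶ Over.mk (T.hom ≫ Limits.prod.fst)).left

lemma pr1_w (S T : Over (a ⨯ a)) :
    pr1 a S T ≫ S.hom ≫ Limits.prod.snd = (pObj a S T).hom := by
  exact Over.w (Limits.prod.fst : pObj a S T ⟶ Over.mk (S.hom ≫ Limits.prod.snd))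

lemma pr2_w (S T : Over (a ⨯ a)) :
    pr2 a S T ≫ T.hom ≫ Limits.prod.fst = (pObj a S T).hom := by
  exact Over.w (Limits.prod.snd : pObj a S T ⟶ Over.mk (T.hom ≫ Limits.prod.fst))

lemma binObj_hom (S T : Over (a ⨯ a)) :
    ((binSpanComp a).obj (S, T)).hom =
      prod.lift (pr1 a S T ≫ S.hom ≫ Limits.prod.fst)
        (pr2 a S T ≫ T.hom ≫ Limits.prod.snd) := rfl

/-- Maps into the apex of a binary product in `Over a` are determined by the projections. -/
lemma pObj_hom_ext {u v : Over a} {Q : A} {x y : Q ⟶ (u ⨯ v).left}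
    (h1 : x ≫ (Limits.prod.fst : u ⨯ v ⟶ u).left = y ≫ (Limits.prod.fst : u ⨯ v ⟶ u).left)
    (h2 : x ≫ (Limits.prod.snd : u ⨯ v ⟶ v).left = y ≫ (Limits.prod.snd : u ⨯ v ⟶ v).left) :
    x = y := by
  have hw : x ≫ (u ⨯ v).hom = y ≫ (u ⨯ v).hom := by
    rw [← Over.w (Limits.prod.fst : u ⨯ v ⟶ u)]
    rw [← Category.assoc, h1, Category.assoc]
  have key : (Over.homMk x rfl : (Over.mk (x ≫ (u ⨯ v).hom) : Over a) ⟶ ((u ⨯ v : Over a))) =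
      Over.homMk y hw.symm := by
    apply Limits.prod.hom_ext <;> apply Over.OverMorphism.ext
    · simpa using h1
    · simpa using h2
  exact congrArg CommaMorphism.left key

/-- Lift a pair of compatible maps to a map into the apex of a binary product in `Over a`. -/
noncomputable def pLift (u v : Over a) {Q : A} (q : Q ⟶ a) (x : Q ⟶ u.left) (y : Q ⟶ v.left)
    (hx : x ≫ u.hom = q) (hy : y ≫ v.hom = q) : Q ⟶ (u ⨯ v).left :=
  (prod.lift (Over.homMk x hx : Over.mk q ⟶ u) (Over.homMk y hy)).left

lemma pLift_fst (u v : Over a) {Q : A} (q : Q ⟶ a) (x : Q ⟶ u.left) (y : Q ⟶ v.left)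
    (hx : x ≫ u.hom = q) (hy : y ≫ v.hom = q) :
    pLift a u v q x y hx hy ≫ (Limits.prod.fst : u ⨯ v ⟶ u).left = x := by
  rw [pLift, ← Over.comp_left, prod.lift_fst]; rfl

lemma pLift_snd (u v : Over a) {Q : A} (q : Q ⟶ a) (x : Q ⟶ u.left) (y : Q ⟶ v.left)
    (hx : x ≫ u.hom = q) (hy : y ≫ v.hom = q) :
    pLift a u v q x y hx hy ≫ (Limits.prod.snd : u ⨯ v ⟶ v).left = y := by
  rw [pLift, ← Over.comp_left, prod.lift_snd]; rfl

lemma binMap_left_pr1 {Z W : Over (a ⨯ a) × Over (a ⨯ a)} (u : Z ⟶ W) :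
    ((binSpanComp a).map u).left ≫ pr1 a W.1 W.2 = pr1 a Z.1 Z.2 ≫ u.1.left := by
  show (prod.map
      (Over.homMk u.1.left (by dsimp; rw [← Category.assoc, Over.w]) :
        Over.mk (Z.1.hom ≫ Limits.prod.snd) ⟶ Over.mk (W.1.hom ≫ Limits.prod.snd))
      (Over.homMk u.2.left (by dsimp; rw [← Category.assoc, Over.w]) :
        Over.mk (Z.2.hom ≫ Limits.prod.fst) ⟶ Over.mk (W.2.hom ≫ Limits.prod.fst))).left ≫
      (Limits.prod.fst : pObj a W.1 W.2 ⟶ Over.mk (W.1.hom ≫ Limits.prod.snd)).left =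
    (Limits.prod.fst : pObj a Z.1 Z.2 ⟶ Over.mk (Z.1.hom ≫ Limits.prod.snd)).left ≫ u.1.left
  rw [← Over.comp_left, prod.map_fst, Over.comp_left]
  rfl

lemma binMap_left_pr2 {Z W : Over (a ⨯ a) × Over (a ⨯ a)} (u : Z ⟶ W) :
    ((binSpanComp a).map u).left ≫ pr2 a W.1 W.2 = pr2 a Z.1 Z.2 ≫ u.2.left := by
  show (prod.map
      (Over.homMk u.1.left (by dsimp; rw [← Category.assoc, Over.w]) :
        Over.mk (Z.1.hom ≫ Limits.prod.snd) ⟶ Over.mk (W.1.hom ≫ Limits.prod.snd))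
      (Over.homMk u.2.left (by dsimp; rw [← Category.assoc, Over.w]) :
        Over.mk (Z.2.hom ≫ Limits.prod.fst) ⟶ Over.mk (W.2.hom ≫ Limits.prod.fst))).left ≫
      (Limits.prod.snd : pObj a W.1 W.2 ⟶ Over.mk (W.2.hom ≫ Limits.prod.fst)).left =
    (Limits.prod.snd : pObj a Z.1 Z.2 ⟶ Over.mk (Z.2.hom ≫ Limits.prod.fst)).left ≫ u.2.left
  rw [← Over.comp_left, prod.map_snd, Over.comp_left]
  rfl

lemma binMap_left_w {Z W : Over (a ⨯ a) × Over (a ⨯ a)} (u : Z ⟶ W) :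
    ((binSpanComp a).map u).left ≫ (pObj a W.1 W.2).hom = (pObj a Z.1 Z.2).hom :=
  Over.w (prod.map
    (Over.homMk u.1.left (by dsimp; rw [← Category.assoc, Over.w]) :
      Over.mk (Z.1.hom ≫ Limits.prod.snd) ⟶ Over.mk (W.1.hom ≫ Limits.prod.snd))
    (Over.homMk u.2.left (by dsimp; rw [← Category.assoc, Over.w]) :
      Over.mk (Z.2.hom ≫ Limits.prod.fst) ⟶ Over.mk (W.2.hom ≫ Limits.prod.fst)))

variable (S T : Over (a ⨯ a))

/-- First component of the value of the left adjoint. -/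
noncomputable def lObj1 (h : Over ((binSpanComp a).obj (S, T))) : Over (a ⨯ a) :=
  Over.mk (h.hom.left ≫ pr1 a S T ≫ S.hom)

/-- Second component of the value of the left adjoint. -/
noncomputable def lObj2 (h : Over ((binSpanComp a).obj (S, T))) : Over (a ⨯ a) :=
  Over.mk (h.hom.left ≫ pr2 a S T ≫ T.hom)

@[simp] lemma lObj1_hom (h : Over ((binSpanComp a).obj (S, T))) :
    (lObj1 a S T h).hom = h.hom.left ≫ pr1 a S T ≫ S.hom := rfl

@[simp] lemma lObj2_hom (h : Over ((binSpanComp a).obj (S, T))) :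
    (lObj2 a S T h).hom = h.hom.left ≫ pr2 a S T ≫ T.hom := rfl

/-- The value of the left adjoint on `h`. -/
noncomputable def lObj (h : Over ((binSpanComp a).obj (S, T))) :
    Over ((S, T) : Over (a ⨯ a) × Over (a ⨯ a)) :=
  Over.mk (((Over.homMk (h.hom.left ≫ pr1 a S T) (by exact Category.assoc _ _ _),
      Over.homMk (h.hom.left ≫ pr2 a S T) (by exact Category.assoc _ _ _)) :
    ((lObj1 a S T h, lObj2 a S T h) : Over (a ⨯ a) × Over (a ⨯ a)) ⟶ (S, T)))

@[simp] lemma lObj_left (h : Over ((binSpanComp a).obj (S, T))) :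
    (lObj a S T h).left = (lObj1 a S T h, lObj2 a S T h) := rfl

lemma h_w (h : Over ((binSpanComp a).obj (S, T))) :
    h.hom.left ≫ ((binSpanComp a).obj (S, T)).hom = h.left.hom := Over.w h.hom

/-- Underlying map of the unit. -/
noncomputable def etaLL (h : Over ((binSpanComp a).obj (S, T))) :
    h.left.left ⟶ (pObj a (lObj1 a S T h) (lObj2 a S T h)).left :=
  pLift a (Over.mk ((lObj1 a S T h).hom ≫ Limits.prod.snd))
    (Over.mk ((lObj2 a S T h).hom ≫ Limits.prod.fst))
    (h.hom.left ≫ (pObj a S T).hom) (𝟙 h.left.left) (𝟙 h.left.left)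
    (by erw [Category.id_comp, lObj1_hom]; erw [Category.assoc, Category.assoc, pr1_w]; rfl)
    (by erw [Category.id_comp, lObj2_hom]; erw [Category.assoc, Category.assoc, pr2_w]; rfl)

lemma etaLL_pr1 (h : Over ((binSpanComp a).obj (S, T))) :
    etaLL a S T h ≫ pr1 a (lObj1 a S T h) (lObj2 a S T h) = 𝟙 h.left.left :=
  pLift_fst a _ _ _ _ _ _ _

lemma etaLL_pr2 (h : Over ((binSpanComp a).obj (S, T))) :
    etaLL a S T h ≫ pr2 a (lObj1 a S T h) (lObj2 a S T h) = 𝟙 h.left.left :=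
  pLift_snd a _ _ _ _ _ _ _

lemma hW_fst (h : Over ((binSpanComp a).obj (S, T))) :
    h.left.hom ≫ Limits.prod.fst = h.hom.left ≫ pr1 a S T ≫ S.hom ≫ Limits.prod.fst := by
  erw [← h_w a S T h, binObj_hom, Category.assoc, prod.lift_fst]
  rfl

lemma hW_snd (h : Over ((binSpanComp a).obj (S, T))) :
    h.left.hom ≫ Limits.prod.snd = h.hom.left ≫ pr2 a S T ≫ T.hom ≫ Limits.prod.snd := by
  erw [← h_w a S T h, binObj_hom, Category.assoc, prod.lift_snd]
  rfl

/-- The unit morphism. -/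
noncomputable def etaHom (h : Over ((binSpanComp a).obj (S, T))) :
    h ⟶ (Over.post (binSpanComp a) (X := (S, T))).obj (lObj a S T h) :=
  Over.homMk
    (Over.homMk (etaLL a S T h) (by
      show etaLL a S T h ≫ ((binSpanComp a).obj (lObj1 a S T h, lObj2 a S T h)).hom = h.left.hom
      apply Limits.prod.hom_ext
      · erw [binObj_hom, Category.assoc, prod.lift_fst, ← Category.assoc, etaLL_pr1,
          Category.id_comp, lObj1_hom, hW_fst]
        erw [Category.assoc, Category.assoc]
        rfl
      · erw [binObj_hom, Category.assoc, prod.lift_snd, ← Category.assoc, etaLL_pr2,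
          Category.id_comp, lObj2_hom, hW_snd]
        erw [Category.assoc, Category.assoc]
        rfl))
    (by
      apply Over.OverMorphism.ext
      apply pObj_hom_ext a
      · show (etaLL a S T h ≫ ((binSpanComp a).map (lObj a S T h).hom).left) ≫ pr1 a S T =
          h.hom.left ≫ pr1 a S T
        have e : ((binSpanComp a).map (lObj a S T h).hom).left ≫ pr1 a S T =
            pr1 a (lObj1 a S T h) (lObj2 a S T h) ≫ (h.hom.left ≫ pr1 a S T) :=
          binMap_left_pr1 a (lObj a S T h).hom
        erw [Category.assoc, e, ← Category.assoc, etaLL_pr1, Category.id_comp]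
        rfl
      · show (etaLL a S T h ≫ ((binSpanComp a).map (lObj a S T h).hom).left) ≫ pr2 a S T =
          h.hom.left ≫ pr2 a S T
        have e : ((binSpanComp a).map (lObj a S T h).hom).left ≫ pr2 a S T =
            pr2 a (lObj1 a S T h) (lObj2 a S T h) ≫ (h.hom.left ≫ pr2 a S T) :=
          binMap_left_pr2 a (lObj a S T h).hom
        erw [Category.assoc, e, ← Category.assoc, etaLL_pr2, Category.id_comp]
        rfl)

lemma w_w (h : Over ((binSpanComp a).obj (S, T)))
    (Z : Over ((S, T) : Over (a ⨯ a) × Over (a ⨯ a)))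
    (w : h ⟶ (Over.post (binSpanComp a) (X := (S, T))).obj Z) :
    w.left.left ≫ ((binSpanComp a).obj (Z.left.1, Z.left.2)).hom = h.left.hom :=
  Over.w w.left

lemma w_binMap (h : Over ((binSpanComp a).obj (S, T)))
    (Z : Over ((S, T) : Over (a ⨯ a) × Over (a ⨯ a)))
    (w : h ⟶ (Over.post (binSpanComp a) (X := (S, T))).obj Z) :
    w.left.left ≫ ((binSpanComp a).map Z.hom).left = h.hom.left := by
  erw [← Over.comp_left]
  exact congrArg CommaMorphism.left (Over.w w)

lemma w_left_left_pObj (h : Over ((binSpanComp a).obj (S, T)))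
    (Z : Over ((S, T) : Over (a ⨯ a) × Over (a ⨯ a)))
    (w : h ⟶ (Over.post (binSpanComp a) (X := (S, T))).obj Z) :
    w.left.left ≫ (pObj a Z.left.1 Z.left.2).hom = h.hom.left ≫ (pObj a S T).hom := by
  have e : ((binSpanComp a).map Z.hom).left ≫ (pObj a S T).hom =
      (pObj a Z.left.1 Z.left.2).hom := binMap_left_w a Z.hom
  erw [← e, ← Category.assoc, w_binMap]

/-- The universal morphism out of `lObj`. -/
noncomputable def descHom (h : Over ((binSpanComp a).obj (S, T)))
    (Z : Over ((S, T) : Over (a ⨯ a) × Over (a ⨯ a)))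
    (w : h ⟶ (Over.post (binSpanComp a) (X := (S, T))).obj Z) :
    lObj a S T h ⟶ Z :=
  Over.homMk
    (((Over.homMk (w.left.left ≫ pr1 a Z.left.1 Z.left.2) (by
        show (w.left.left ≫ pr1 a Z.left.1 Z.left.2) ≫ Z.left.1.hom =
          h.hom.left ≫ pr1 a S T ≫ S.hom
        have e1 : pr1 a Z.left.1 Z.left.2 ≫ Z.left.1.hom ≫ Limits.prod.fst =
            ((binSpanComp a).obj (Z.left.1, Z.left.2)).hom ≫ Limits.prod.fst := by
          erw [binObj_hom, prod.lift_fst]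
        apply Limits.prod.hom_ext
        · erw [Category.assoc, Category.assoc, e1, ← Category.assoc, w_w a S T h Z w,
            hW_fst a S T h]
          simp only [Category.assoc]; erw [Category.assoc]
        · erw [Category.assoc, Category.assoc, pr1_w, w_left_left_pObj a S T h Z w,
            ← pr1_w a S T]
          simp only [Category.assoc]; erw [Category.assoc]; rfl),
      Over.homMk (w.left.left ≫ pr2 a Z.left.1 Z.left.2) (by
        show (w.left.left ≫ pr2 a Z.left.1 Z.left.2) ≫ Z.left.2.hom =
          h.hom.left ≫ pr2 a S T ≫ T.hom
        have e1 : pr2 a Z.left.1 Z.left.2 ≫ Z.left.2.hom ≫ Limits.prod.snd =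
            ((binSpanComp a).obj (Z.left.1, Z.left.2)).hom ≫ Limits.prod.snd := by
          erw [binObj_hom, prod.lift_snd]
        apply Limits.prod.hom_ext
        · erw [Category.assoc, Category.assoc, pr2_w, w_left_left_pObj a S T h Z w,
            ← pr2_w a S T]
          simp only [Category.assoc]; erw [Category.assoc]; rfl
        · erw [Category.assoc, Category.assoc, e1, ← Category.assoc, w_w a S T h Z w,
            hW_snd a S T h]
          simp only [Category.assoc]; erw [Category.assoc])) :
      ((lObj1 a S T h, lObj2 a S T h) : Over (a ⨯ a) × Over (a ⨯ a)) ⟶ (Z.left.1, Z.left.2)))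
    (by
      refine Prod.ext ?_ ?_ <;> apply Over.OverMorphism.ext
      · show (w.left.left ≫ pr1 a Z.left.1 Z.left.2) ≫ Z.hom.1.left = h.hom.left ≫ pr1 a S T
        have e : ((binSpanComp a).map Z.hom).left ≫ pr1 a S T =
            pr1 a Z.left.1 Z.left.2 ≫ Z.hom.1.left := binMap_left_pr1 a Z.hom
        erw [Category.assoc, ← e, ← Category.assoc, w_binMap]
      · show (w.left.left ≫ pr2 a Z.left.1 Z.left.2) ≫ Z.hom.2.left = h.hom.left ≫ pr2 a S T
        have e : ((binSpanComp a).map Z.hom).left ≫ pr2 a S T =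
            pr2 a Z.left.1 Z.left.2 ≫ Z.hom.2.left := binMap_left_pr2 a Z.hom
        erw [Category.assoc, ← e, ← Category.assoc, w_binMap])

/-- The slice of the binary span-composition functor is a right adjoint. -/
theorem binSlice_isRightAdjoint (ST : Over (a ⨯ a) × Over (a ⨯ a)) :
    (Over.post (binSpanComp a) (X := ST)).IsRightAdjoint := by
  obtain ⟨S, T⟩ := ST
  rw [isRightAdjoint_iff_hasInitial_structuredArrow]
  intro h
  refine IsInitial.hasInitial (X := StructuredArrow.mk (etaHom a S T h)) ?_
  refine IsInitial.ofUniqueHom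
    (fun Y => StructuredArrow.homMk (descHom a S T h Y.right Y.hom) ?_) ?_
  · apply Over.OverMorphism.ext
    apply Over.OverMorphism.ext
    apply pObj_hom_ext a
    · show (etaLL a S T h ≫
          ((binSpanComp a).map (descHom a S T h Y.right Y.hom).left).left) ≫
            pr1 a Y.right.left.1 Y.right.left.2 =
        Y.hom.left.left ≫ pr1 a Y.right.left.1 Y.right.left.2
      have e : ((binSpanComp a).map (descHom a S T h Y.right Y.hom).left).left ≫
            pr1 a Y.right.left.1 Y.right.left.2 =
          pr1 a (lObj1 a S T h) (lObj2 a S T h) ≫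
            (Y.hom.left.left ≫ pr1 a Y.right.left.1 Y.right.left.2) :=
        binMap_left_pr1 a (descHom a S T h Y.right Y.hom).left
      erw [Category.assoc, e, ← Category.assoc, etaLL_pr1, Category.id_comp]
      rfl
    · show (etaLL a S T h ≫
          ((binSpanComp a).map (descHom a S T h Y.right Y.hom).left).left) ≫
            pr2 a Y.right.left.1 Y.right.left.2 =
        Y.hom.left.left ≫ pr2 a Y.right.left.1 Y.right.left.2
      have e : ((binSpanComp a).map (descHom a S T h Y.right Y.hom).left).left ≫
            pr2 a Y.right.left.1 Y.right.left.2 =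
          pr2 a (lObj1 a S T h) (lObj2 a S T h) ≫
            (Y.hom.left.left ≫ pr2 a Y.right.left.1 Y.right.left.2) :=
        binMap_left_pr2 a (descHom a S T h Y.right Y.hom).left
      erw [Category.assoc, e, ← Category.assoc, etaLL_pr2, Category.id_comp]
      rfl
  · intro Y m
    have hw := StructuredArrow.w m
    apply StructuredArrow.ext
    apply Over.OverMorphism.ext
    refine Prod.ext ?_ ?_ <;> apply Over.OverMorphism.ext
    · show m.right.left.1.left = Y.hom.left.left ≫ pr1 a Y.right.left.1 Y.right.left.2
      have e3 : etaLL a S T h ≫ ((binSpanComp a).map m.right.left).left = Y.hom.left.left := by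
        rw [← hw]; rfl
      have e : ((binSpanComp a).map m.right.left).left ≫
            pr1 a Y.right.left.1 Y.right.left.2 =
          pr1 a (lObj1 a S T h) (lObj2 a S T h) ≫ m.right.left.1.left :=
        binMap_left_pr1 a m.right.left
      erw [← e3, Category.assoc, e, ← Category.assoc, etaLL_pr1]
      exact (Category.id_comp _).symm
    · show m.right.left.2.left = Y.hom.left.left ≫ pr2 a Y.right.left.1 Y.right.left.2
      have e3 : etaLL a S T h ≫ ((binSpanComp a).map m.right.left).left = Y.hom.left.left := by
        rw [← hw]; rfl
      have e : ((binSpanComp a).map m.right.left).left ≫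
            pr2 a Y.right.left.1 Y.right.left.2 =
          pr2 a (lObj1 a S T h) (lObj2 a S T h) ≫ m.right.left.2.left :=
        binMap_left_pr2 a m.right.left
      erw [← e3, Category.assoc, e, ← Category.assoc, etaLL_pr2]
      exact (Category.id_comp _).symm

end BinSlice

/-- For `A` with finite products and `a : A` such that `A/a` has finite
products, the `n`-fold pullback-composition of endospans of `a` is a local right adjoint,
for every `n`. -/
theorem stmt12 [HasFiniteProducts A] (a : A) [HasFiniteProducts (Over a)] (n : ℕ) :
    ∀ X : Fin n → Over (a ⨯ a), (Over.post (spanCompN a n) (X := X)).IsRightAdjoint := by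
  induction n with
  | zero =>
    intro X
    rw [isRightAdjoint_iff_hasInitial_structuredArrow]
    intro h
    have key : ∀ (Z : Over X) (v : h ⟶ (Over.post (spanCompN a 0)).obj Z), v.left = h.hom := by
      intro Z v
      have hv := Over.w v
      exact (Category.comp_id _).symm.trans hv
    refine IsInitial.hasInitial (X := StructuredArrow.mk
      (Over.homMk h.hom (by exact Category.comp_id _) :
        h ⟶ (Over.post (spanCompN a 0)).obj (Over.mk (𝟙 X)))) ?_
    refine IsInitial.ofUniqueHom
      (fun Y => StructuredArrow.homMk
        (Over.homMk (fun i => i.elim0) (funext fun i => i.elim0)) ?_) ?_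
    · apply Over.OverMorphism.ext
      exact (key Y.right _).trans (key Y.right Y.hom).symm
    · intro Y m
      apply StructuredArrow.ext
      apply Over.OverMorphism.ext
      funext i
      exact i.elim0
  | succ n ih =>
    intro X
    haveI hIH : (Over.post (spanCompN a n)
        (X := fun j : Fin n => X j.castSucc)).IsRightAdjoint := ih _
    show (Over.post
      ((Functor.prod'
          (Pi.comap (fun _ : Fin (n + 1) => Over (a ⨯ a)) Fin.castSucc ⋙ spanCompN a n)
          (Pi.eval _ (Fin.last n))) ⋙ binSpanComp a) (X := X)).IsRightAdjoint
    rw [Over.post_comp]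
    haveI hPre : (Over.post
        (Functor.prod'
          (Pi.comap (fun _ : Fin (n + 1) => Over (a ⨯ a)) Fin.castSucc ⋙ spanCompN a n)
          (Pi.eval _ (Fin.last n))) (X := X)).IsRightAdjoint := by
      haveI : ((Over.post (spanCompN a n) (X := fun j : Fin n => X j.castSucc)).prod
          (𝟭 (Over (X (Fin.last n))))).IsRightAdjoint := prod_isRightAdjoint
      have iso : (finSplit X ⋙
          (Over.post (spanCompN a n) (X := fun j : Fin n => X j.castSucc)).prod
            (𝟭 (Over (X (Fin.last n))))) ⋙
          (pairOverEquiv ((spanCompN a n).obj (fun j : Fin n => X j.castSucc))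
            (X (Fin.last n))).inverse ≅
        Over.post
          (Functor.prod'
            (Pi.comap (fun _ : Fin (n + 1) => Over (a ⨯ a)) Fin.castSucc ⋙ spanCompN a n)
            (Pi.eval _ (Fin.last n))) (X := X) :=
        NatIso.ofComponents (fun Z => Iso.refl _) (by
          intro Z W u
          apply Over.OverMorphism.ext
          erw [Category.comp_id, Category.id_comp]
          rfl)
      haveI : (finSplit X).IsRightAdjoint := inferInstance
      haveI : (pairOverEquiv ((spanCompN a n).obj (fun j : Fin n => X j.castSucc))
            (X (Fin.last n))).inverse.IsRightAdjoint := inferInstance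
      haveI : (finSplit X ⋙
          (Over.post (spanCompN a n) (X := fun j : Fin n => X j.castSucc)).prod
            (𝟭 (Over (X (Fin.last n))))).IsRightAdjoint := Functor.isRightAdjoint_comp
      haveI : ((finSplit X ⋙
          (Over.post (spanCompN a n) (X := fun j : Fin n => X j.castSucc)).prod
            (𝟭 (Over (X (Fin.last n))))) ⋙
          (pairOverEquiv ((spanCompN a n).obj (fun j : Fin n => X j.castSucc))
            (X (Fin.last n))).inverse).IsRightAdjoint := Functor.isRightAdjoint_comp
      exact @Functor.isRightAdjoint_of_iso _ _ _ _ _ _ iso this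
    haveI hBin : (Over.post (binSpanComp a)
        (X := (Functor.prod'
          (Pi.comap (fun _ : Fin (n + 1) => Over (a ⨯ a)) Fin.castSucc ⋙ spanCompN a n)
          (Pi.eval _ (Fin.last n))).obj X)).IsRightAdjoint :=
      binSlice_isRightAdjoint a _
    infer_instance

end Paper
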